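/- arXiv:2404.19650 — 5 statements merged into one kernel-verified Lean document; each statement's English description precedes it below -/
import Mathlib

section
/- Let (S,∘) be a semigroup, A a subset that is piecewise syndetic, and suppose A = C₁ ∪ C₂. Then C₁ is piecewise syndetic or C₂ is piecewise syndetic. (Partition regularity of piecewise syndeticity for 2-partitions.) -/
def Thick {S : Type*} [Semigroup S] (A : Set S) : Prop :=
  ∀ F : Finset S, ∃ x : S, ∀ f ∈ F, f * x ∈ A

def PiecewiseSyndetic {S : Type*} [Semigroup S] (A : Set S) : Prop :=
  ∃ F : Finset S, Thick {x : S | ∃ s ∈ F, s * x ∈ A}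

lemma thick_mono {S : Type*} [Semigroup S] {A B : Set S} (h : A ⊆ B)
    (hA : Thick A) : Thick B := by
  intro F
  obtain ⟨x, hx⟩ := hA F
  exact ⟨x, fun f hf => h (hx f hf)⟩

lemma thick_pws {S : Type*} [Semigroup S] {A : Set S} (a : S)
    (hA : Thick A) : PiecewiseSyndetic A := by
  classical
  refine ⟨{a}, fun G => ?_⟩
  obtain ⟨x, hx⟩ := hA (G.image (fun g => a * g))
  refine ⟨x, fun g hg => ?_⟩
  refine ⟨a, Finset.mem_singleton_self a, ?_⟩
  have := hx (a * g) (Finset.mem_image_of_mem _ hg)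
  rwa [mul_assoc] at this

lemma pws_comp {S : Type*} [Semigroup S] {C : Set S} (F : Finset S)
    (h : PiecewiseSyndetic {x : S | ∃ s ∈ F, s * x ∈ C}) :
    PiecewiseSyndetic C := by
  classical
  obtain ⟨G, hG⟩ := h
  refine ⟨(F ×ˢ G).image (fun p => p.1 * p.2), thick_mono ?_ hG⟩
  rintro x ⟨t, htG, s, hsF, hst⟩
  refine ⟨s * t, Finset.mem_image.2 ⟨(s, t), Finset.mem_product.2 ⟨hsF, htG⟩, rfl⟩, ?_⟩
  rwa [mul_assoc]

lemma thick_union {S : Type*} [Semigroup S] {T B₁ B₂ : Set S}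
    (hT : Thick T) (hsub : T ⊆ B₁ ∪ B₂) (h1 : ¬ PiecewiseSyndetic B₁) :
    Thick B₂ := by
  classical
  intro G
  unfold PiecewiseSyndetic at h1
  push_neg at h1
  have hnt := h1 G
  unfold Thick at hnt
  push_neg at hnt
  obtain ⟨H, hH⟩ := hnt
  obtain ⟨x, hx⟩ := hT ((G ×ˢ H).image (fun p => p.1 * p.2))
  obtain ⟨h, hhH, hh⟩ := hH x
  refine ⟨h * x, fun g hg => ?_⟩
  have hmem : (g * h) * x ∈ T :=
    hx (g * h) ((Finset.mem_image.2 ⟨(g, h), Finset.mem_product.2 ⟨hg, hhH⟩, rfl⟩))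
  rw [mul_assoc] at hmem
  rcases hsub hmem with h1' | h2'
  · exact absurd (show ∃ s ∈ G, s * (h * x) ∈ B₁ from ⟨g, hg, h1'⟩) hh
  · exact h2'

theorem piecewiseSyndetic_partition_regular {S : Type*} [Semigroup S]
    (A C₁ C₂ : Set S) (hA : PiecewiseSyndetic A) (hP : A = C₁ ∪ C₂) :
    PiecewiseSyndetic C₁ ∨ PiecewiseSyndetic C₂ := by
  obtain ⟨F, hF⟩ := hA
  obtain ⟨a, _⟩ := hF ∅
  set B₁ : Set S := {x | ∃ s ∈ F, s * x ∈ C₁}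
  set B₂ : Set S := {x | ∃ s ∈ F, s * x ∈ C₂}
  by_cases h1 : PiecewiseSyndetic B₁
  · exact Or.inl (pws_comp F h1)
  · have hsub : {x : S | ∃ s ∈ F, s * x ∈ A} ⊆ B₁ ∪ B₂ := by
      rintro x ⟨s, hsF, hsx⟩
      rw [hP] at hsx
      rcases hsx with h | h
      · exact Or.inl ⟨s, hsF, h⟩
      · exact Or.inr ⟨s, hsF, h⟩
    have h2 : Thick B₂ := thick_union hF hsub h1
    exact Or.inr (pws_comp F (thick_pws a h2))
end

section
/- Let R be the free semigroup on two generators x and y (nonempty words in {x,y}), let S be the subsemigroup of all nonempty words in x only, let φ : S → R be the inclusion homomorphism, and let A = yR = {yw : w ∈ R}. Then A is syndetic in R, but for every s ∈ S the set φ(s)⁻¹A = {r ∈ R : φ(s)·r ∈ A} is empty. -/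
def Syndetic {S : Type*} [Semigroup S] (A : Set S) : Prop :=
  ∃ F : Finset S, ∀ x : S, ∃ s ∈ F, s * x ∈ A

theorem free_semigroup_counterexample :
    let R := FreeSemigroup Bool
    let y : R := FreeSemigroup.of true
    let x : R := FreeSemigroup.of false
    let A : Set R := {w | ∃ r : R, w = y * r}
    Syndetic A ∧
      ∀ s ∈ Subsemigroup.closure ({x} : Set R), {r : R | s * r ∈ A} = ∅ := by
  intro R y x A
  constructor
  · exact ⟨{y}, fun w => ⟨y, Finset.mem_singleton_self y, w, rfl⟩⟩
  · intro s hs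
    have hhead : s.1 = false := by
      induction hs using Subsemigroup.closure_induction with
      | mem a ha => rw [Set.mem_singleton_iff.mp ha]; rfl
      | mul a b _ _ iha ihb => rw [FreeSemigroup.head_mul]; exact iha
    ext r
    simp only [Set.mem_setOf_eq, Set.mem_empty_iff_false, iff_false]
    rintro ⟨w, hw⟩
    have : (s * r).1 = (y * w).1 := by rw [hw]
    rw [FreeSemigroup.head_mul, FreeSemigroup.head_mul, hhead] at this
    exact Bool.false_ne_true this
end

section
/- Let (S, +, ·) be a semiring (a set with a commutative associative addition, an associative multiplication, and two-sided distributivity; additive and multiplicative units are not required). Let n ≥ 1 and k ≥ 1 be natural numbers, and let A ⊆ S be both thick and syndetic with respect to the multiplicative structure (S,·). Then there exist x₁, …, xₙ ∈ S such that each xᵢ ∈ A, the product x₁x₂⋯xₙ ∈ A, and every linear combination a₁x₁ + a₂x₂ + ⋯ + aₙxₙ with natural number coefficients 0 ≤ aᵢ ≤ k, not all zero, lies in A. -/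
def MulThick {S : Type*} [Semigroup S] (A : Set S) : Prop :=
  ∀ F : Finset S, ∃ x : S, ∀ f ∈ F, f * x ∈ A

def MulSyndetic {S : Type*} [Semigroup S] (A : Set S) : Prop :=
  ∃ F : Finset S, ∀ x : S, ∃ s ∈ F, s * x ∈ A

section Aux

variable {S : Type*}

lemma foldl_mul_shift [Semigroup S] (l : List S) (u v : S) :
    l.foldl (· * ·) (u * v) = u * l.foldl (· * ·) v := by
  induction l generalizing v with
  | nil => rfl
  | cons a l ih => simpa [mul_assoc] using ih (v * a)

lemma foldl_add_map_mul [AddCommSemigroup S] [Semigroup S]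
    (rd : ∀ a b c : S, (a + b) * c = a * c + b * c)
    (l : List S) (t u : S) :
    (l.map (· * t)).foldl (· + ·) (u * t) = (l.foldl (· + ·) u) * t := by
  induction l generalizing u with
  | nil => rfl
  | cons a l ih => simp only [List.map_cons, List.foldl_cons, ← rd, ih]

def combo [AddCommSemigroup S] (n : ℕ) (c : S) (v : Fin n → S) (a : Fin n → ℕ) : S :=
  match (List.finRange n).flatMap (fun i => List.replicate (a i) (v i)) with
  | [] => c
  | h :: t => t.foldl (· + ·) h

lemma combo_eq [AddCommSemigroup S] (n : ℕ) (c : S) (v : Fin n → S) (a : Fin n → ℕ)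
    (h : S) (tl : List S)
    (hcons : (List.finRange n).flatMap (fun i => List.replicate (a i) (v i)) = h :: tl) :
    combo n c v a = tl.foldl (· + ·) h := by
  unfold combo
  rw [hcons]

end Aux

theorem thick_and_syndetic_pattern {S : Type*} [AddCommSemigroup S] [Semigroup S]
    (ld : ∀ a b c : S, a * (b + c) = a * b + a * c)
    (rd : ∀ a b c : S, (a + b) * c = a * c + b * c)
    (n k : ℕ) (hn : 1 ≤ n) (hk : 1 ≤ k)
    (A : Set S) (hT : MulThick A) (hS : MulSyndetic A) :
    ∃ x : Fin n → S,
      (∀ i, x i ∈ A) ∧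
      (∀ h t, List.ofFn x = h :: t → t.foldl (· * ·) h ∈ A) ∧
      (∀ a : Fin n → ℕ, (∀ i, a i ≤ k) →
        ∀ h t, ((List.finRange n).flatMap fun i => List.replicate (a i) (x i)) = h :: t →
          t.foldl (· + ·) h ∈ A) := by
  classical
  obtain ⟨F, hF⟩ := hS
  obtain ⟨c, -⟩ := hT ∅
  set cv : S → Fin n → S := fun s i => if (i : ℕ) = 0 then s else c with hcv
  set G : Finset S :=
    insert c (F ∪ ((F ×ˢ Fintype.piFinset fun _ : Fin n => Finset.range (k + 1)).image
      fun p => combo n c (cv p.1) p.2)) with hGdef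
  obtain ⟨t, ht⟩ := hT G
  set y : S := (List.replicate (n - 1) (c * t)).foldl (· * ·) t with hy
  obtain ⟨s, hsF, hsy⟩ := hF y
  have hcvG : ∀ i, cv s i ∈ G := by
    intro i
    simp only [hcv]
    split
    · exact Finset.mem_insert_of_mem (Finset.mem_union_left _ hsF)
    · exact Finset.mem_insert_self _ _
  refine ⟨fun i => cv s i * t, fun i => ht _ (hcvG i), ?_, ?_⟩
  · -- product
    have hofn : List.ofFn (fun i : Fin n => cv s i * t)
        = (s * t) :: List.replicate (n - 1) (c * t) := by
      apply List.ext_getElem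
      · simp; omega
      · intro i h1 h2
        simp only [List.getElem_ofFn]
        match i with
        | 0 => simp [hcv]
        | (j + 1) =>
          rw [List.getElem_cons_succ, List.getElem_replicate]
          simp [hcv]
    intro h tl heq
    rw [hofn] at heq
    injection heq with h1 h2
    subst h1; subst h2
    rw [foldl_mul_shift]
    exact hsy
  · -- sums
    intro a ha h tl heq
    obtain ⟨h', tl', hcons⟩ : ∃ h' tl',
        (List.finRange n).flatMap (fun i => List.replicate (a i) (cv s i)) = h' :: tl' := by
      rcases hL : (List.finRange n).flatMap (fun i => List.replicate (a i) (cv s i)) with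
        _ | ⟨h', tl'⟩
      · exfalso
        have hmap : ((List.finRange n).flatMap (fun i => List.replicate (a i) (cv s i))).map
            (· * t) = (List.finRange n).flatMap (fun i => List.replicate (a i) (cv s i * t)) := by
          simp [List.map_flatMap]
        rw [hL] at hmap
        simp only [List.map_nil] at hmap
        rw [← hmap] at heq
        exact List.cons_ne_nil _ _ heq.symm
      · exact ⟨h', tl', rfl⟩
    have hmap : (List.finRange n).flatMap (fun i => List.replicate (a i) (cv s i * t))
        = (h' * t) :: tl'.map (· * t) := by
      have : ((List.finRange n).flatMap (fun i => List.replicate (a i) (cv s i))).map (· * t)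
          = (List.finRange n).flatMap (fun i => List.replicate (a i) (cv s i * t)) := by
        simp [List.map_flatMap]
      rw [← this, hcons, List.map_cons]
    rw [hmap] at heq
    injection heq with h1 h2
    subst h1; subst h2
    rw [foldl_add_map_mul rd]
    have hc : tl'.foldl (· + ·) h' = combo n c (cv s) a := (combo_eq n c (cv s) a h' tl' hcons).symm
    rw [hc]
    apply ht
    refine Finset.mem_insert_of_mem (Finset.mem_union_right _ ?_)
    refine Finset.mem_image.2 ⟨(s, a), ?_, rfl⟩
    refine Finset.mem_product.2 ⟨hsF, ?_⟩
    simp only [Fintype.mem_piFinset, Finset.mem_range]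
    intro i; exact Nat.lt_succ_of_le (ha i)
end

section
/- Let (S, +, ·) be a semiring and A ⊆ S both multiplicatively thick and multiplicatively syndetic. Then there exist x, y ∈ S with {x, y, x·y, x+y} ⊆ A. -/
theorem thick_and_syndetic_xy_pattern {S : Type*} [AddCommSemigroup S] [Semigroup S]
    (ld : ∀ a b c : S, a * (b + c) = a * b + a * c)
    (rd : ∀ a b c : S, (a + b) * c = a * c + b * c)
    (A : Set S) (hT : MulThick A) (hS : MulSyndetic A) :
    ∃ x y : S, x ∈ A ∧ y ∈ A ∧ x * y ∈ A ∧ x + y ∈ A := by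
  classical
  obtain ⟨F₀, hF₀⟩ := hS
  obtain ⟨v, -⟩ := hT ∅
  obtain ⟨c, hc⟩ := hT (insert v (F₀ ∪ F₀.image (· + v)))
  obtain ⟨u, hu, hu4⟩ := hF₀ (c * (v * c))
  refine ⟨u * c, v * c, ?_, ?_, ?_, ?_⟩
  · exact hc u (by simp [hu])
  · exact hc v (by simp)
  · rw [mul_assoc]; exact hu4
  · rw [← rd]
    refine hc (u + v) ?_
    simp only [Finset.mem_insert, Finset.mem_union, Finset.mem_image]
    exact Or.inr (Or.inr ⟨u, hu, rfl⟩)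
end

section
/- Let (S,·) be a semigroup and A, B ⊆ S. If A is thick and B is syndetic, then A ∩ B is nonempty. Moreover, A ∩ B is piecewise syndetic. -/
theorem thick_inter_syndetic {S : Type*} [Semigroup S] (A B : Set S)
    (hA : Thick A) (hB : Syndetic B) :
    (A ∩ B).Nonempty ∧ PiecewiseSyndetic (A ∩ B) := by
  obtain ⟨F, hF⟩ := hB
  constructor
  · obtain ⟨x, hx⟩ := hA F
    obtain ⟨s, hs, hsx⟩ := hF x
    exact ⟨s * x, hx s hs, hsx⟩
  · refine ⟨F, fun G => ?_⟩
    classical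
    obtain ⟨y, hy⟩ := hA ((F ×ˢ G).image (fun p => p.1 * p.2))
    refine ⟨y, fun g hg => ?_⟩
    obtain ⟨s, hs, hsb⟩ := hF (g * y)
    refine ⟨s, hs, ?_, hsb⟩
    have : (s * g) * y ∈ A := hy _ (Finset.mem_image.2 ⟨(s, g), Finset.mem_product.2 ⟨hs, hg⟩, rfl⟩)
    rwa [mul_assoc] at this
end
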